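/- Fix real numbers κ1, κ2, κ3 and ε = ±1 with ε·κ2 ≠ 0, and consider the Lie algebra g on R^4 with basis {u1, u2, u3, u4} and nonzero brackets [u1, u3] = −ε·u2, [u1, u4] = κ1·u2 + κ2·u3, [u3, u4] = κ3·u2. Then g is nilpotent of nilpotency class exactly 3; that is, the lower central series satisfies g ⊋ [g,g] ⊋ [g,[g,g]] ⊋ 0 with [g,[g,[g,g]]] = 0. -/

import Mathlib

noncomputable section

/-- The standard basis `u1, u2, u3, u4` of `ℝ⁴`. -/
def e4 (i : Fin 4) : Fin 4 → ℝ := Pi.single i 1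

/-- The bracket `[u1,u3] = -ε u2`, `[u1,u4] = κ1 u2 + κ2 u3`, `[u3,u4] = κ3 u2` (with
`ε κ2 ≠ 0`) satisfies the Jacobi identity, and the resulting Lie algebra is nilpotent
of class exactly 3: `g ⊋ [g,g] ⊋ [g,[g,g]] ⊋ 0` and `[g,[g,[g,g]]] = 0`. -/
theorem threeStepNilpotent (κ1 κ2 κ3 ε : ℝ) (hε : ε = 1 ∨ ε = -1) (hκ : ε * κ2 ≠ 0) :
    (∀ B : (Fin 4 → ℝ) →ₗ[ℝ] (Fin 4 → ℝ) →ₗ[ℝ] (Fin 4 → ℝ),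
      (∀ X Y, B X Y = - B Y X) →
      B (e4 0) (e4 2) = (-ε) • e4 1 →
      B (e4 0) (e4 3) = κ1 • e4 1 + κ2 • e4 2 →
      B (e4 2) (e4 3) = κ3 • e4 1 →
      B (e4 0) (e4 1) = 0 → B (e4 1) (e4 2) = 0 → B (e4 1) (e4 3) = 0 →
      ∀ X Y Z, B (B X Y) Z + B (B Y Z) X + B (B Z X) Y = 0) ∧
    (∀ (L : Type) [LieRing L] [LieAlgebra ℝ L] (b : Module.Basis (Fin 4) ℝ L),
      ⁅b 0, b 2⁆ = (-ε) • b 1 →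
      ⁅b 0, b 3⁆ = κ1 • b 1 + κ2 • b 2 →
      ⁅b 2, b 3⁆ = κ3 • b 1 →
      ⁅b 0, b 1⁆ = 0 → ⁅b 1, b 2⁆ = 0 → ⁅b 1, b 3⁆ = 0 →
      LieModule.lowerCentralSeries ℝ L L 1 < LieModule.lowerCentralSeries ℝ L L 0 ∧
      LieModule.lowerCentralSeries ℝ L L 2 < LieModule.lowerCentralSeries ℝ L L 1 ∧
      ⊥ < LieModule.lowerCentralSeries ℝ L L 2 ∧
      LieModule.lowerCentralSeries ℝ L L 3 = ⊥) := by
  constructor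
  · intro B hsk h02 h03 h23 h01 h12 h13
    have hxx : ∀ X, B X X = 0 := by
      intro X
      have h := hsk X X
      funext i
      have hi := congrFun h i
      have hi' : B X X i = -(B X X i) := hi
      have : B X X i = 0 := by linarith
      simpa using this
    have h10 : B (e4 1) (e4 0) = 0 := by rw [hsk, h01, neg_zero]
    have h20 : B (e4 2) (e4 0) = ε • e4 1 := by rw [hsk, h02]; module
    have h30 : B (e4 3) (e4 0) = (-κ1) • e4 1 + (-κ2) • e4 2 := by rw [hsk, h03]; module
    have h21 : B (e4 2) (e4 1) = 0 := by rw [hsk, h12, neg_zero]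
    have h31 : B (e4 3) (e4 1) = 0 := by rw [hsk, h13, neg_zero]
    have h32 : B (e4 3) (e4 2) = (-κ3) • e4 1 := by rw [hsk, h23]; module
    have hX : ∀ X : Fin 4 → ℝ, X = X 0 • e4 0 + X 1 • e4 1 + X 2 • e4 2 + X 3 • e4 3 := by
      intro X; funext i; fin_cases i <;> simp [e4, Pi.single_apply]
    intro X Y Z
    rw [hX X, hX Y, hX Z]
    simp only [map_add, map_smul, LinearMap.add_apply, LinearMap.smul_apply,
      h01, h02, h03, h12, h13, h23, h10, h20, h30, h21, h31, h32, hxx,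
      map_zero, LinearMap.zero_apply, smul_zero, zero_add, add_zero, smul_add, smul_smul]
    module
  · intro L _ _ b h02 h03 h23 h01 h12 h13
    have hκ2 : κ2 ≠ 0 := fun h => hκ (by rw [h, mul_zero])
    -- reversed brackets
    have h20 : ⁅b 2, b 0⁆ = ε • b 1 := by rw [← lie_skew, h02]; module
    have h30 : ⁅b 3, b 0⁆ = (-κ1) • b 1 + (-κ2) • b 2 := by rw [← lie_skew, h03]; module
    have h32 : ⁅b 3, b 2⁆ = (-κ3) • b 1 := by rw [← lie_skew, h23]; module
    have h10 : ⁅b 1, b 0⁆ = 0 := by rw [← lie_skew, h01, neg_zero]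
    have h21 : ⁅b 2, b 1⁆ = 0 := by rw [← lie_skew, h12, neg_zero]
    have h31 : ⁅b 3, b 1⁆ = 0 := by rw [← lie_skew, h13, neg_zero]
    -- b 1 is central
    have hA : ∀ x : L, ⁅x, b 1⁆ = 0 := by
      have key : ∀ x ∈ Submodule.span ℝ (Set.range b), ⁅x, b 1⁆ = (0 : L) := by
        intro x hx
        induction hx using Submodule.span_induction with
        | mem x hx =>
          obtain ⟨i, rfl⟩ := hx
          fin_cases i
          · show ⁅b 0, b 1⁆ = 0; exact h01
          · show ⁅b 1, b 1⁆ = 0; exact lie_self _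
          · show ⁅b 2, b 1⁆ = 0; exact h21
          · show ⁅b 3, b 1⁆ = 0; exact h31
        | zero => rw [zero_lie]
        | add x y _ _ hx hy => rw [add_lie, hx, hy, add_zero]
        | smul c x _ hx => rw [smul_lie, hx, smul_zero]
      intro x; exact key x (by rw [b.span_eq]; trivial)
    have hB2 : ∀ x : L, ⁅x, b 2⁆ ∈ Submodule.span ℝ ({b 1} : Set L) := by
      have key : ∀ x ∈ Submodule.span ℝ (Set.range b),
          ⁅x, b 2⁆ ∈ Submodule.span ℝ ({b 1} : Set L) := by
        intro x hx
        induction hx using Submodule.span_induction with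
        | mem x hx =>
          obtain ⟨i, rfl⟩ := hx
          fin_cases i
          · show ⁅b 0, b 2⁆ ∈ _
            rw [h02]; exact Submodule.smul_mem _ _ (Submodule.mem_span_singleton_self _)
          · show ⁅b 1, b 2⁆ ∈ _
            rw [h12]; exact Submodule.zero_mem _
          · show ⁅b 2, b 2⁆ ∈ _
            rw [lie_self]; exact Submodule.zero_mem _
          · show ⁅b 3, b 2⁆ ∈ _
            rw [h32]; exact Submodule.smul_mem _ _ (Submodule.mem_span_singleton_self _)
        | zero => rw [zero_lie]; exact Submodule.zero_mem _
        | add x y _ _ hx hy => rw [add_lie]; exact Submodule.add_mem _ hx hy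
        | smul c x _ hx => rw [smul_lie]; exact Submodule.smul_mem _ _ hx
      intro x; exact key x (by rw [b.span_eq]; trivial)
    have h1mem : b 1 ∈ Submodule.span ℝ ({b 1, b 2} : Set L) := Submodule.subset_span (by simp)
    have h2mem : b 2 ∈ Submodule.span ℝ ({b 1, b 2} : Set L) := Submodule.subset_span (by simp)
    have hspan1le : Submodule.span ℝ ({b 1} : Set L) ≤ Submodule.span ℝ ({b 1, b 2} : Set L) :=
      Submodule.span_mono (by simp)
    -- all brackets lie in span {b1, b2}
    have hBB : ∀ x y : L, ⁅x, y⁆ ∈ Submodule.span ℝ ({b 1, b 2} : Set L) := by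
      have key0 : ∀ x ∈ Submodule.span ℝ (Set.range b),
          ⁅x, b 0⁆ ∈ Submodule.span ℝ ({b 1, b 2} : Set L) := by
        intro x hx
        induction hx using Submodule.span_induction with
        | mem x hx =>
          obtain ⟨i, rfl⟩ := hx
          fin_cases i
          · show ⁅b 0, b 0⁆ ∈ _; rw [lie_self]; exact Submodule.zero_mem _
          · show ⁅b 1, b 0⁆ ∈ _; rw [h10]; exact Submodule.zero_mem _
          · show ⁅b 2, b 0⁆ ∈ _; rw [h20]; exact Submodule.smul_mem _ _ h1mem
          · show ⁅b 3, b 0⁆ ∈ _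
            rw [h30]
            exact Submodule.add_mem _ (Submodule.smul_mem _ _ h1mem) (Submodule.smul_mem _ _ h2mem)
        | zero => rw [zero_lie]; exact Submodule.zero_mem _
        | add x y _ _ hx hy => rw [add_lie]; exact Submodule.add_mem _ hx hy
        | smul c x _ hx => rw [smul_lie]; exact Submodule.smul_mem _ _ hx
      have key3 : ∀ x ∈ Submodule.span ℝ (Set.range b),
          ⁅x, b 3⁆ ∈ Submodule.span ℝ ({b 1, b 2} : Set L) := by
        intro x hx
        induction hx using Submodule.span_induction with
        | mem x hx =>
          obtain ⟨i, rfl⟩ := hx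
          fin_cases i
          · show ⁅b 0, b 3⁆ ∈ _
            rw [h03]
            exact Submodule.add_mem _ (Submodule.smul_mem _ _ h1mem) (Submodule.smul_mem _ _ h2mem)
          · show ⁅b 1, b 3⁆ ∈ _; rw [h13]; exact Submodule.zero_mem _
          · show ⁅b 2, b 3⁆ ∈ _; rw [h23]; exact Submodule.smul_mem _ _ h1mem
          · show ⁅b 3, b 3⁆ ∈ _; rw [lie_self]; exact Submodule.zero_mem _
        | zero => rw [zero_lie]; exact Submodule.zero_mem _
        | add x y _ _ hx hy => rw [add_lie]; exact Submodule.add_mem _ hx hy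
        | smul c x _ hx => rw [smul_lie]; exact Submodule.smul_mem _ _ hx
      have key : ∀ y ∈ Submodule.span ℝ (Set.range b), ∀ x : L,
          ⁅x, y⁆ ∈ Submodule.span ℝ ({b 1, b 2} : Set L) := by
        intro y hy
        induction hy using Submodule.span_induction with
        | mem y hy =>
          obtain ⟨i, rfl⟩ := hy
          intro x
          fin_cases i
          · show ⁅x, b 0⁆ ∈ _; exact key0 x (by rw [b.span_eq]; trivial)
          · show ⁅x, b 1⁆ ∈ _; rw [hA]; exact Submodule.zero_mem _
          · show ⁅x, b 2⁆ ∈ _; exact hspan1le (hB2 x)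
          · show ⁅x, b 3⁆ ∈ _; exact key3 x (by rw [b.span_eq]; trivial)
        | zero => intro x; rw [lie_zero]; exact Submodule.zero_mem _
        | add y z _ _ hy hz => intro x; rw [lie_add]; exact Submodule.add_mem _ (hy x) (hz x)
        | smul c y _ hy => intro x; rw [lie_smul]; exact Submodule.smul_mem _ _ (hy x)
      intro x y; exact key y (by rw [b.span_eq]; trivial) x
    have hS1toS2 : ∀ (x : L), ∀ m ∈ Submodule.span ℝ ({b 1, b 2} : Set L),
        ⁅x, m⁆ ∈ Submodule.span ℝ ({b 1} : Set L) := by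
      intro x m hm
      induction hm using Submodule.span_induction with
      | mem m hm =>
        rcases hm with h | h
        · rw [h, hA]; exact Submodule.zero_mem _
        · rw [Set.mem_singleton_iff] at h; rw [h]; exact hB2 x
      | zero => rw [lie_zero]; exact Submodule.zero_mem _
      | add m n _ _ hm hn => rw [lie_add]; exact Submodule.add_mem _ hm hn
      | smul c m _ hm => rw [lie_smul]; exact Submodule.smul_mem _ _ hm
    have hS2kill : ∀ (x : L), ∀ m ∈ Submodule.span ℝ ({b 1} : Set L), ⁅x, m⁆ = (0 : L) := by
      intro x m hm
      induction hm using Submodule.span_induction with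
      | mem m hm => rw [Set.mem_singleton_iff] at hm; rw [hm, hA]
      | zero => rw [lie_zero]
      | add m n _ _ hm hn => rw [lie_add, hm, hn, add_zero]
      | smul c m _ hm => rw [lie_smul, hm, smul_zero]
    -- upper bounds on the lower central series
    have hlcs1 : ∀ m ∈ LieModule.lowerCentralSeries ℝ L L 1,
        m ∈ Submodule.span ℝ ({b 1, b 2} : Set L) := by
      have : LieModule.lowerCentralSeries ℝ L L 1 ≤
          { toSubmodule := Submodule.span ℝ ({b 1, b 2} : Set L),
            lie_mem := fun {x m} hm => hspan1le (hS1toS2 x m hm) } := by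
        rw [LieModule.lowerCentralSeries_succ, LieSubmodule.lie_le_iff]
        intro x _ m _
        exact hBB x m
      exact fun m hm => this hm
    have hlcs2 : ∀ m ∈ LieModule.lowerCentralSeries ℝ L L 2,
        m ∈ Submodule.span ℝ ({b 1} : Set L) := by
      have : LieModule.lowerCentralSeries ℝ L L 2 ≤
          { toSubmodule := Submodule.span ℝ ({b 1} : Set L),
            lie_mem := fun {x m} hm => by
              have := hS2kill x m hm
              rw [this]; exact Submodule.zero_mem _ } := by
        rw [LieModule.lowerCentralSeries_succ, LieSubmodule.lie_le_iff]
        intro x _ m hm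
        exact hS1toS2 x m (hlcs1 m hm)
      exact fun m hm => this hm
    have hlcs3 : LieModule.lowerCentralSeries ℝ L L 3 = ⊥ := by
      rw [eq_bot_iff, LieModule.lowerCentralSeries_succ, LieSubmodule.lie_le_iff]
      intro x _ m hm
      rw [LieSubmodule.mem_bot]
      exact hS2kill x m (hlcs2 m hm)
    -- b 1 ∈ lcs 2
    have hb1 : b 1 ∈ LieModule.lowerCentralSeries ℝ L L 2 := by
      have hmem : ⁅b 0, ⁅b 0, b 3⁆⁆ ∈ LieModule.lowerCentralSeries ℝ L L 2 := by
        rw [LieModule.lowerCentralSeries_succ]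
        exact LieSubmodule.lie_mem_lie (LieSubmodule.mem_top _) (by
          rw [LieModule.lowerCentralSeries_succ]
          exact LieSubmodule.lie_mem_lie (LieSubmodule.mem_top _) (LieSubmodule.mem_top _))
      have hcalc : ⁅b 0, ⁅b 0, b 3⁆⁆ = (κ2 * (-ε)) • b 1 := by
        rw [h03, lie_add, lie_smul, lie_smul, h01, h02, smul_zero, zero_add, smul_smul]
      rw [hcalc] at hmem
      have hc : κ2 * (-ε) ≠ 0 := by
        intro h
        apply hκ
        have : ε * κ2 = -(κ2 * (-ε)) := by ring
        rw [this, h, neg_zero]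
      have := (LieModule.lowerCentralSeries ℝ L L 2).smul_mem (κ2 * (-ε))⁻¹ hmem
      rwa [smul_smul, inv_mul_cancel₀ hc, one_smul] at this
    -- b 2 ∈ lcs 1
    have hb2 : b 2 ∈ LieModule.lowerCentralSeries ℝ L L 1 := by
      have hmem : ⁅b 0, b 3⁆ ∈ LieModule.lowerCentralSeries ℝ L L 1 := by
        rw [LieModule.lowerCentralSeries_succ]
        exact LieSubmodule.lie_mem_lie (LieSubmodule.mem_top _) (LieSubmodule.mem_top _)
      rw [h03] at hmem
      have hb1' : b 1 ∈ LieModule.lowerCentralSeries ℝ L L 1 :=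
        LieModule.antitone_lowerCentralSeries ℝ L L (by norm_num) hb1
      have h2' : κ2 • b 2 ∈ LieModule.lowerCentralSeries ℝ L L 1 := by
        have := (LieModule.lowerCentralSeries ℝ L L 1).sub_mem hmem
          ((LieModule.lowerCentralSeries ℝ L L 1).smul_mem κ1 hb1')
        simpa using this
      have := (LieModule.lowerCentralSeries ℝ L L 1).smul_mem κ2⁻¹ h2'
      rwa [smul_smul, inv_mul_cancel₀ hκ2, one_smul] at this
    -- non-membership facts
    have hnot0 : b 0 ∉ Submodule.span ℝ ({b 1, b 2} : Set L) := by
      have : ({b 1, b 2} : Set L) = b '' {1, 2} := by rw [Set.image_insert_eq, Set.image_singleton]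
      rw [this]
      exact b.linearIndependent.notMem_span_image (by decide)
    have hnot2 : b 2 ∉ Submodule.span ℝ ({b 1} : Set L) := by
      have : ({b 1} : Set L) = b '' {1} := by rw [Set.image_singleton]
      rw [this]
      exact b.linearIndependent.notMem_span_image (by decide)
    refine ⟨?_, ?_, ?_, hlcs3⟩
    · refine lt_of_le_of_ne (LieModule.antitone_lowerCentralSeries ℝ L L (by norm_num)) ?_
      intro h
      have : b 0 ∈ LieModule.lowerCentralSeries ℝ L L 1 := by
        rw [h, LieModule.lowerCentralSeries_zero]; trivial
      exact hnot0 (hlcs1 _ this)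
    · refine lt_of_le_of_ne (LieModule.antitone_lowerCentralSeries ℝ L L (by norm_num)) ?_
      intro h
      rw [← h] at hb2
      exact hnot2 (hlcs2 _ hb2)
    · refine lt_of_le_of_ne bot_le ?_
      intro h
      rw [← h, LieSubmodule.mem_bot] at hb1
      exact b.ne_zero 1 hb1
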